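/- Main indistinguishability lemma (combinatorial core): Let f : GF(2)^N → GF(2)^{r+m} be surjective with kernel C₀, and suppose every nonzero element of the dual code C₀^⊥ has Hamming weight at least dN. For x ∈ GF(2)^{r+m} let ρ_x be the uniform mixture of computational basis projectors over the coset f^{-1}(x), with matrix entries taken in the Hadamard-rotated basis {H^{⊗N}|α⟩}. If t < dN/2 and |φ⟩ lies in the span of {H^{⊗N}|α⟩ : d(α, ŵ) ≤ t} for some fixed ŵ ∈ {0,1}^N, then ⟨φ| ρ_x |φ⟩ = ⟨φ| ρ_{x'} |φ⟩ for all x, x' ∈ GF(2)^{r+m}. -/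

import Mathlib

open Matrix

/-- The GF(2) inner product `α ⊙ β = ⊕ᵢ αᵢ βᵢ`. -/
def dotp {N : ℕ} (α β : Fin N → ZMod 2) : ZMod 2 := ∑ i, α i * β i

/-- The sign `(-1)^z ∈ ℂ` attached to `z ∈ GF(2)`. -/
def sgn (z : ZMod 2) : ℂ := (-1 : ℂ) ^ z.val

/-- The Hadamard-rotated basis vector `|φ_α⟩ = H^{⊗N}|ψ_α⟩`. -/
noncomputable def hcol {N : ℕ} (α : Fin N → ZMod 2) : (Fin N → ZMod 2) → ℂ :=
  fun β => ((Real.sqrt 2 : ℂ))⁻¹ ^ N * sgn (dotp α β)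

/-- The uniform mixture of computational-basis projectors over `S ⊆ GF(2)^N`. -/
noncomputable def mix {N : ℕ} (S : Set (Fin N → ZMod 2)) :
    Matrix (Fin N → ZMod 2) (Fin N → ZMod 2) ℂ :=
  (Nat.card S : ℂ)⁻¹ • ∑ β ∈ (Set.toFinite S).toFinset, Matrix.single β β 1


-- helpers
theorem aux_sum_mulVec {n m R : Type*} [Fintype n] [NonUnitalNonAssocSemiring R]
    {ι : Type*} (s : Finset ι) (M : ι → Matrix m n R) (v : n → R) :
    (∑ i ∈ s, M i) *ᵥ v = ∑ i ∈ s, M i *ᵥ v := by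
  ext j
  simp [Matrix.mulVec, dotProduct, Finset.sum_apply, Matrix.sum_apply, Finset.sum_mul]
  rw [Finset.sum_comm]

theorem aux_dotProduct_sum {n R : Type*} [Fintype n] [NonUnitalNonAssocSemiring R]
    {ι : Type*} (s : Finset ι) (u : n → R) (f : ι → n → R) :
    u ⬝ᵥ (∑ i ∈ s, f i) = ∑ i ∈ s, u ⬝ᵥ f i := by
  simp [dotProduct, Finset.sum_apply, Finset.mul_sum]
  rw [Finset.sum_comm]

theorem sgn_add (a b : ZMod 2) : sgn (a + b) = sgn a * sgn b := by
  obtain ha | ha := (by decide : ∀ z : ZMod 2, z = 0 ∨ z = 1) a <;>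
  obtain hb | hb := (by decide : ∀ z : ZMod 2, z = 0 ∨ z = 1) b <;>
  subst ha <;> subst hb <;>
  simp [sgn, show (1 + 1 : ZMod 2) = 0 from rfl, show ((0:ZMod 2)).val = 0 from rfl,
    show ((1:ZMod 2)).val = 1 from rfl]

theorem sgn_conj (a : ZMod 2) : star (sgn a) = sgn a := by
  obtain ha | ha := (by decide : ∀ z : ZMod 2, z = 0 ∨ z = 1) a <;> subst ha <;>
    simp [sgn, show ((0:ZMod 2)).val = 0 from rfl, show ((1:ZMod 2)).val = 1 from rfl]

theorem dotp_add_left {N : ℕ} (γ δ β : Fin N → ZMod 2) :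
    dotp (γ + δ) β = dotp γ β + dotp δ β := by
  simp [dotp, add_mul, Finset.sum_add_distrib]

theorem dotp_add_right {N : ℕ} (γ β δ : Fin N → ZMod 2) :
    dotp γ (β + δ) = dotp γ β + dotp γ δ := by
  simp [dotp, mul_add, Finset.sum_add_distrib]

-- quadratic form on mix
theorem quad_mix {N : ℕ} (S : Set (Fin N → ZMod 2)) (u v : (Fin N → ZMod 2) → ℂ) :
    star u ⬝ᵥ (mix S *ᵥ v)
      = (Nat.card S : ℂ)⁻¹ * ∑ β ∈ (Set.toFinite S).toFinset, star (u β) * v β := by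
  rw [mix, Matrix.smul_mulVec, dotProduct_smul, smul_eq_mul, aux_sum_mulVec,
    aux_dotProduct_sum]
  congr 1
  refine Finset.sum_congr rfl fun β hβ => ?_
  rw [Matrix.single_mulVec]
  simp [dotProduct, Function.update_apply]

-- the character sum
theorem char_sum_zero {N r : ℕ} (f : Matrix (Fin r) (Fin N) (ZMod 2))
    (x : Fin r → ZMod 2) (γ : Fin N → ZMod 2)
    (δ₀ : Fin N → ZMod 2) (hδ₀ : f.mulVec δ₀ = 0) (hd : dotp γ δ₀ ≠ 0) :
    ∑ β ∈ (Set.toFinite {β : Fin N → ZMod 2 | f.mulVec β = x}).toFinset, sgn (dotp γ β) = 0 := by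
  have hd1 : dotp γ δ₀ = 1 := by
    obtain h | h := (by decide : ∀ z : ZMod 2, z = 0 ∨ z = 1) (dotp γ δ₀)
    · exact absurd h hd
    · exact h
  set T := ∑ β ∈ (Set.toFinite {β : Fin N → ZMod 2 | f.mulVec β = x}).toFinset, sgn (dotp γ β)
    with hT
  have key : T = -T := by
    rw [hT]
    rw [← Finset.sum_neg_distrib]
    refine Finset.sum_nbij' (fun β => β + δ₀) (fun β => β + δ₀) ?_ ?_ ?_ ?_ ?_
    · intro β hβ
      simp only [Set.Finite.mem_toFinset, Set.mem_setOf_eq] at hβ ⊢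
      rw [Matrix.mulVec_add, hβ, hδ₀, add_zero]
    · intro β hβ
      simp only [Set.Finite.mem_toFinset, Set.mem_setOf_eq] at hβ ⊢
      rw [Matrix.mulVec_add, hβ, hδ₀, add_zero]
    · intro β _; ext i; simp only [Pi.add_apply]
      generalize β i = a; generalize δ₀ i = b; revert a b; decide
    · intro β _; ext i; simp only [Pi.add_apply]
      generalize β i = a; generalize δ₀ i = b; revert a b; decide
    · intro β _
      rw [dotp_add_right, hd1, sgn_add]
      simp [sgn, show ((1:ZMod 2)).val = 1 from rfl]
  have h2 : T + T = 0 := by linear_combination key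
  exact add_self_eq_zero.mp h2

theorem hcol_pair {N : ℕ} (α α' β : Fin N → ZMod 2) :
    star (hcol α β) * hcol α' β
      = (star (((Real.sqrt 2 : ℂ))⁻¹ ^ N) * ((Real.sqrt 2 : ℂ))⁻¹ ^ N)
          * sgn (dotp (α + α') β) := by
  rw [dotp_add_left, sgn_add, hcol, hcol, star_mul', sgn_conj]
  ring

theorem card_coset_ne_zero {N r : ℕ} (f : Matrix (Fin r) (Fin N) (ZMod 2))
    (hf : Function.Surjective f.mulVec) (x : Fin r → ZMod 2) :
    (Nat.card {β : Fin N → ZMod 2 | f.mulVec β = x} : ℂ) ≠ 0 := by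
  obtain ⟨β₀, hβ₀⟩ := hf x
  have : Nonempty {β : Fin N → ZMod 2 | f.mulVec β = x} := ⟨⟨β₀, hβ₀⟩⟩
  have : Finite {β : Fin N → ZMod 2 | f.mulVec β = x} :=
    (Set.toFinite _).to_subtype
  exact_mod_cast Nat.card_pos.ne'

theorem card_toFinset_eq {N : ℕ} (S : Set (Fin N → ZMod 2)) :
    ((Set.toFinite S).toFinset.card : ℂ) = (Nat.card S : ℂ) := by
  rw [Nat.card_coe_set_eq, Set.ncard_eq_toFinset_card S (Set.toFinite S)]

theorem hamming_eq {N : ℕ} (α α' : Fin N → ZMod 2) :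
    hammingDist (α + α') 0 = hammingDist α α' := by
  unfold hammingDist
  congr 1
  ext i
  simp only [Finset.mem_filter, Pi.add_apply, Pi.zero_apply, Finset.mem_univ, true_and]
  generalize α i = a; generalize α' i = b
  revert a b; decide

theorem key_gen {r N dN t : ℕ}
    (f : Matrix (Fin r) (Fin N) (ZMod 2)) (hf : Function.Surjective f.mulVec)
    (hmin : ∀ γ : Fin N → ZMod 2,
      (∀ δ : Fin N → ZMod 2, f.mulVec δ = 0 → dotp γ δ = 0) → γ ≠ 0 →
        dN ≤ hammingDist γ 0)
    (ht : 2 * t < dN) (w0 : Fin N → ZMod 2)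
    (x x' : Fin r → ZMod 2) (α α' : Fin N → ZMod 2)
    (hα : hammingDist α w0 ≤ t) (hα' : hammingDist α' w0 ≤ t) :
    star (hcol α) ⬝ᵥ (mix {γ : Fin N → ZMod 2 | f.mulVec γ = x} *ᵥ hcol α')
      = star (hcol α) ⬝ᵥ (mix {γ : Fin N → ZMod 2 | f.mulVec γ = x'} *ᵥ hcol α') := by
  rw [quad_mix, quad_mix]
  set K := star (((Real.sqrt 2 : ℂ))⁻¹ ^ N) * ((Real.sqrt 2 : ℂ))⁻¹ ^ N with hK
  have hrw : ∀ (y : Fin r → ZMod 2),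
      ∑ β ∈ (Set.toFinite {γ : Fin N → ZMod 2 | f.mulVec γ = y}).toFinset,
          star (hcol α β) * hcol α' β
        = K * ∑ β ∈ (Set.toFinite {γ : Fin N → ZMod 2 | f.mulVec γ = y}).toFinset,
            sgn (dotp (α + α') β) := by
    intro y
    rw [Finset.mul_sum]
    exact Finset.sum_congr rfl fun β _ => hcol_pair α α' β
  rw [hrw, hrw]
  by_cases h0 : α + α' = 0
  · -- diagonal: both equal K
    have hs : ∀ (y : Fin r → ZMod 2),
        ((Nat.card {γ : Fin N → ZMod 2 | f.mulVec γ = y} : ℂ))⁻¹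
          * (K * ∑ β ∈ (Set.toFinite {γ : Fin N → ZMod 2 | f.mulVec γ = y}).toFinset,
              sgn (dotp (α + α') β)) = K := by
      intro y
      have : ∀ β, sgn (dotp (α + α') β) = 1 := by
        intro β; rw [h0]
        simp [dotp, sgn, show ((0:ZMod 2)).val = 0 from rfl]
      simp only [this, Finset.sum_const, nsmul_eq_mul, mul_one]
      rw [card_toFinset_eq, mul_comm K, ← mul_assoc,
        inv_mul_cancel₀ (card_coset_ne_zero f hf y), one_mul]
    rw [hs, hs]
  · by_cases hdual : ∀ δ : Fin N → ZMod 2, f.mulVec δ = 0 → dotp (α + α') δ = 0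
    · -- impossible by distance
      exfalso
      have h1 := hmin _ hdual h0
      rw [hamming_eq] at h1
      have h2 : hammingDist α α' ≤ 2 * t := by
        calc hammingDist α α' ≤ hammingDist α w0 + hammingDist w0 α' := hammingDist_triangle _ _ _
        _ ≤ t + t := by
          have := hammingDist_comm w0 α'
          omega
        _ = 2 * t := by ring
      omega
    · push_neg at hdual
      obtain ⟨δ₀, hδ₀, hd⟩ := hdual
      rw [char_sum_zero f x _ δ₀ hδ₀ hd, char_sum_zero f x' _ δ₀ hδ₀ hd]
      simp

theorem main_indist' (r m N dN t : ℕ)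
    (f : Matrix (Fin (r + m)) (Fin N) (ZMod 2)) (hf : Function.Surjective f.mulVec)
    (hmin : ∀ γ : Fin N → ZMod 2,
      (∀ δ : Fin N → ZMod 2, f.mulVec δ = 0 → dotp γ δ = 0) → γ ≠ 0 →
        dN ≤ hammingDist γ 0)
    (ht : 2 * t < dN) (w0 : Fin N → ZMod 2) (φ : (Fin N → ZMod 2) → ℂ)
    (hφ : φ ∈ Submodule.span ℂ
      (hcol '' {α : Fin N → ZMod 2 | hammingDist α w0 ≤ t}))
    (x x' : Fin (r + m) → ZMod 2) :
    star φ ⬝ᵥ (mix {γ : Fin N → ZMod 2 | f.mulVec γ = x} *ᵥ φ)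
      = star φ ⬝ᵥ (mix {γ : Fin N → ZMod 2 | f.mulVec γ = x'} *ᵥ φ) := by
  set G := hcol '' {α : Fin N → ZMod 2 | hammingDist α w0 ≤ t} with hG
  set M := mix {γ : Fin N → ZMod 2 | f.mulVec γ = x} with hM
  set M' := mix {γ : Fin N → ZMod 2 | f.mulVec γ = x'} with hM'
  suffices h : ∀ u ∈ Submodule.span ℂ G, ∀ v ∈ Submodule.span ℂ G,
      star u ⬝ᵥ (M *ᵥ v) = star u ⬝ᵥ (M' *ᵥ v) from h φ hφ φ hφ
  intro u hu
  induction hu using Submodule.span_induction with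
  | mem u hu =>
    intro v hv
    induction hv using Submodule.span_induction with
    | mem v hv =>
      obtain ⟨α, hα, rfl⟩ := hu
      obtain ⟨α', hα', rfl⟩ := hv
      exact key_gen f hf hmin ht w0 x x' α α' hα hα'
    | zero => simp
    | add v w hv hw ihv ihw => rw [Matrix.mulVec_add, Matrix.mulVec_add,
        dotProduct_add, dotProduct_add, ihv, ihw]
    | smul c v hv ihv => rw [Matrix.mulVec_smul, Matrix.mulVec_smul,
        dotProduct_smul, dotProduct_smul, ihv]
  | zero => intro v hv; simp
  | add u w hu hw ihu ihw =>
    intro v hv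
    rw [star_add, add_dotProduct, add_dotProduct, ihu v hv, ihw v hv]
  | smul c u hu ihu =>
    intro v hv
    rw [star_smul, smul_dotProduct, smul_dotProduct, ihu v hv]

/-- Main indistinguishability lemma (combinatorial core): if every nonzero element of
the dual `C₀^⊥` of the kernel of the surjective map `f` has Hamming weight at least
`dN`, `t < dN/2`, and `|φ⟩` lies in the span of the Hadamard-rotated basis vectors
`{H^{⊗N}|α⟩ : d(α,ŵ) ≤ t}`, then `⟨φ|ρ_x|φ⟩ = ⟨φ|ρ_{x'}|φ⟩` for all syndromes
`x, x'`, where `ρ_x` is the uniform mixture over the coset `f⁻¹(x)`. -/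
theorem main_indistinguishability (r m N dN t : ℕ)
    (f : Matrix (Fin (r + m)) (Fin N) (ZMod 2)) (hf : Function.Surjective f.mulVec)
    (hmin : ∀ γ : Fin N → ZMod 2,
      (∀ δ : Fin N → ZMod 2, f.mulVec δ = 0 → dotp γ δ = 0) → γ ≠ 0 →
        dN ≤ hammingDist γ 0)
    (ht : 2 * t < dN) (w0 : Fin N → ZMod 2) (φ : (Fin N → ZMod 2) → ℂ)
    (hφ : φ ∈ Submodule.span ℂ
      (hcol '' {α : Fin N → ZMod 2 | hammingDist α w0 ≤ t}))
    (x x' : Fin (r + m) → ZMod 2) :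
    star φ ⬝ᵥ (mix {γ : Fin N → ZMod 2 | f.mulVec γ = x} *ᵥ φ)
      = star φ ⬝ᵥ (mix {γ : Fin N → ZMod 2 | f.mulVec γ = x'} *ᵥ φ) :=
  main_indist' r m N dN t f hf hmin ht w0 φ hφ x x'
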